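/- (GS implies OS under KŁ) Suppose f(x,·) satisfies the KŁ property with exponent θ. If (x,y) ∈ X × Y is an ε-game stationary point (dist(0,∇_x f(x,y)+∂𝟙_X(x)) ≤ ε and dist(0,−∇_y f(x,y)+∂𝟙_Y(y)) ≤ ε), then it is an O(ε^{min{1, 1/(2θ)}})-optimization stationary point, i.e., ‖prox_{(max_{y∈Y} f(·,y))/r₁ + 𝟙_X}(x) − x‖ ≤ O(ε^{min{1,1/(2θ)}}). -/

import Mathlib

open scoped RealInnerProductSpace

set_option maxHeartbeats 1000000

lemma descent_lemma {E : Type*} [NormedAddCommGroup E] [InnerProductSpace ℝ E]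
    [CompleteSpace E]
    (g : E → ℝ) (g' : E → E) (L : ℝ) (hg : ∀ u, HasGradientAt g (g' u) u)
    (hL : ∀ u u', ‖g' u - g' u'‖ ≤ L * ‖u - u'‖) (x v : E) :
    g (x + v) ≤ g x + ⟪g' x, v⟫ + L / 2 * ‖v‖ ^ 2 := by
  set ψ : ℝ → ℝ := fun t => g (x + t • v) - t * ⟪g' x, v⟫ - L * ‖v‖ ^ 2 / 2 * t ^ 2 with hψ
  have hψd : ∀ t : ℝ, HasDerivAt ψ
      (⟪g' (x + t • v), v⟫ - ⟪g' x, v⟫ - L * ‖v‖ ^ 2 * t) t := by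
    intro t
    have hc : HasDerivAt (fun t : ℝ => x + t • v) v t := by
      simpa using ((hasDerivAt_id t).smul_const v).const_add x
    have h1 : HasDerivAt (fun t : ℝ => g (x + t • v)) ⟪g' (x + t • v), v⟫ t := by
      have := ((hg (x + t • v)).hasFDerivAt).comp_hasDerivAt t hc
      simpa [InnerProductSpace.toDual_apply_apply, Function.comp_def] using this
    have h2 : HasDerivAt (fun t : ℝ => t * ⟪g' x, v⟫) ⟪g' x, v⟫ t := by
      simpa using (hasDerivAt_id t).mul_const (⟪g' x, v⟫ : ℝ)
    have h3 : HasDerivAt (fun t : ℝ => L * ‖v‖ ^ 2 / 2 * t ^ 2) (L * ‖v‖ ^ 2 * t) t := by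
      have := (hasDerivAt_pow 2 t).const_mul (L * ‖v‖ ^ 2 / 2)
      convert this using 1
      · rfl
      · rfl
      · ring
    exact (h1.sub h2).sub h3
  have hanti : AntitoneOn ψ (Set.Icc (0 : ℝ) 1) := by
    apply antitoneOn_of_deriv_nonpos (convex_Icc 0 1)
    · exact fun t _ => (hψd t).continuousAt.continuousWithinAt
    · exact fun t _ => (hψd t).differentiableAt.differentiableWithinAt
    · intro t ht
      rw [interior_Icc] at ht
      rw [(hψd t).deriv]
      have h4 : (⟪g' (x + t • v) - g' x, v⟫ : ℝ) ≤ ‖g' (x + t • v) - g' x‖ * ‖v‖ :=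
        real_inner_le_norm _ _
      have h5 : ‖g' (x + t • v) - g' x‖ ≤ L * (t * ‖v‖) := by
        have := hL (x + t • v) x
        simpa [norm_smul, abs_of_pos ht.1] using this
      have h6 : ‖g' (x + t • v) - g' x‖ * ‖v‖ ≤ L * (t * ‖v‖) * ‖v‖ :=
        mul_le_mul_of_nonneg_right h5 (norm_nonneg v)
      rw [inner_sub_left] at h4
      nlinarith [sq_nonneg ‖v‖]
  have h01 : ψ 1 ≤ ψ 0 :=
    hanti (Set.mem_Icc.2 ⟨le_refl 0, zero_le_one⟩) (Set.mem_Icc.2 ⟨zero_le_one, le_refl 1⟩)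
      zero_le_one
  simp only [hψ, one_smul, zero_smul, add_zero, zero_mul, one_pow, mul_one, sub_zero,
    zero_pow, mul_zero] at h01
  linarith

/-- GS implies OS under KŁ: if `(x,y) ∈ X × Y` is an `ε`-game
stationary point and `f(x,·)` satisfies the KŁ property with exponent `θ`, then
`(x,y)` is an `O(ε^{min{1,1/(2θ)}})`-optimization stationary point, where the
optimization stationarity is measured by `‖prox(x) − x‖` with
`prox(x) = x*(x) = argmin_{u∈X} max_{y∈Y} f(u,y) + (r₁/2)‖u−x‖²`. -/
theorem stmt_17
    {E D : Type*} [NormedAddCommGroup E] [InnerProductSpace ℝ E] [CompleteSpace E]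
    [NormedAddCommGroup D] [InnerProductSpace ℝ D] [CompleteSpace D]
    (f : E → D → ℝ) (gx : E → D → E) (gy : E → D → D) (Lx Ly r₁ r₂ θ τ : ℝ)
    (hr₁ : r₁ > Lx) (hr₂ : r₂ > Ly) (hθ : 0 < θ) (hθ1 : θ < 1) (hτ : 0 < τ)
    (X : Set E) (Y : Set D)
    (hXc : IsCompact X) (hXconv : Convex ℝ X) (hXne : X.Nonempty)
    (hYc : IsCompact Y) (hYconv : Convex ℝ Y) (hYne : Y.Nonempty)
    (hgradx : ∀ x y, HasGradientAt (fun x' => f x' y) (gx x y) x)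
    (hgrady : ∀ x y, HasGradientAt (fun y' => f x y') (gy x y) y)
    (hLipx : ∀ x x' y y', ‖gx x y - gx x' y'‖ ≤ Lx * (‖x - x'‖ + ‖y - y'‖))
    (hLipy : ∀ x x' y y', ‖gy x y - gy x' y'‖ ≤ Ly * (‖x - x'‖ + ‖y - y'‖))
    -- KŁ property with exponent θ of the dual function:
    (hKL : ∀ x ∈ X, ∀ y ∈ Y,
      (sSup ((fun y' => f x y') '' Y) - f x y) ^ θ ≤
        (1 / τ) * Metric.infDist (0 : D)
          {g | ∃ n : D, (∀ w ∈ Y, ⟪n, w - y⟫ ≤ 0) ∧ g = -(gy x y) + n})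
    (F : E → D → E → D → ℝ)
    (hF : ∀ x y z v, F x y z v
      = f x y + r₁ / 2 * ‖x - z‖ ^ 2 - r₂ / 2 * ‖y - v‖ ^ 2)
    -- h(x,z,v) = max_{y∈Y} F(x,y,z,v) and x(z,v) = argmin_{x∈X} h(x,z,v)
    (h : E → E → D → ℝ) (yOf : E → E → D → D)
    (hyOf : ∀ x z v, yOf x z v ∈ Y ∧ IsMaxOn (fun y => F x y z v) Y (yOf x z v) ∧
      h x z v = F x (yOf x z v) z v)
    (xm : E → D → E)
    (hxm : ∀ z v, xm z v ∈ X ∧ IsMinOn (fun x => h x z v) X (xm z v))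
    -- d(y,z,v) = min_{x∈X} F(x,y,z,v) and y(z,v) = argmax_{y∈Y} d(y,z,v)
    (d : D → E → D → ℝ) (xOf : D → E → D → E)
    (hxOf : ∀ y z v, xOf y z v ∈ X ∧ IsMinOn (fun x => F x y z v) X (xOf y z v) ∧
      d y z v = F (xOf y z v) y z v)
    (yzv : E → D → D)
    (hyzv : ∀ z v, yzv z v ∈ Y ∧ IsMaxOn (fun y => d y z v) Y (yzv z v))
    -- x*(z) = argmin_{x∈X} max_{y∈Y} f(x,y) + (r₁/2)‖x−z‖², where ymax x attains max_{y∈Y} f(x,·)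
    (ymax : E → D)
    (hymax : ∀ x, ymax x ∈ Y ∧ IsMaxOn (fun y => f x y) Y (ymax x))
    (xstar : E → E)
    (hxstar : ∀ z, xstar z ∈ X ∧
      IsMinOn (fun x => f x (ymax x) + r₁ / 2 * ‖x - z‖ ^ 2) X (xstar z)) :
    ∃ C > (0 : ℝ), ∀ (ε : ℝ), 0 ≤ ε → ∀ x ∈ X, ∀ y ∈ Y,
      Metric.infDist (0 : E)
          {g | ∃ n : E, (∀ w ∈ X, ⟪n, w - x⟫ ≤ 0) ∧ g = gx x y + n} ≤ ε →
      Metric.infDist (0 : D)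
          {g | ∃ n : D, (∀ w ∈ Y, ⟪n, w - y⟫ ≤ 0) ∧ g = -(gy x y) + n} ≤ ε →
      ‖xstar x - x‖ ≤ C * ε ^ (min (1 : ℝ) (1 / (2 * θ))) := by
  have hμ : (0 : ℝ) < (r₁ - Lx) / 2 := by linarith
  set μ : ℝ := (r₁ - Lx) / 2 with hμdef
  set m : ℝ := min (1 : ℝ) (1 / (2 * θ)) with hmdef
  have hm0 : 0 < m := lt_min one_pos (by positivity)
  have hm1 : m ≤ 1 := min_le_left _ _
  have hm2 : m ≤ 1 / (2 * θ) := min_le_right _ _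
  set R : ℝ := Metric.diam X with hRdef
  have hR : 0 ≤ R := Metric.diam_nonneg
  have h2μ : (0 : ℝ) < 2 / μ := div_pos two_pos hμ
  set c : ℝ := (1 : ℝ) / (2 * θ) with hcdef
  set C₁ : ℝ := 2 / μ + Real.sqrt (2 / μ) * (1 / τ) ^ c with hC₁def
  have hτc : (0 : ℝ) ≤ (1 / τ) ^ c := Real.rpow_nonneg (by positivity) _
  have hC₁pos : 0 < C₁ :=
    add_pos_of_pos_of_nonneg h2μ (mul_nonneg (Real.sqrt_nonneg _) hτc)
  refine ⟨C₁ + R, by linarith, ?_⟩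
  intro ε hε x hx y hy hinfx hinfy
  set s : E := xstar x with hsdef
  have hsX : s ∈ X := (hxstar x).1
  set δ : ℝ := ‖s - x‖ with hδdef
  have hδ0 : 0 ≤ δ := norm_nonneg _
  set a : ℝ := (ε / τ) ^ ((1 : ℝ) / θ) with hadef
  have ha0 : 0 ≤ a := Real.rpow_nonneg (by positivity) _
  -- Step 1: minimality of xstar x
  have hmin : f s (ymax s) + r₁ / 2 * δ ^ 2 ≤ f x (ymax x) := by
    have := isMinOn_iff.1 (hxstar x).2 x hx
    simpa [hδdef, hsdef] using this
  -- Step 2: gap bound from KŁ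
  have hmaxx := isMaxOn_iff.1 (hymax x).2
  have hgap0 : 0 ≤ f x (ymax x) - f x y := by
    have := hmaxx y hy; simpa using sub_nonneg.2 this
  have hsup : sSup ((fun y' => f x y') '' Y) = f x (ymax x) := by
    apply le_antisymm
    · apply csSup_le (hYne.image _)
      rintro z ⟨w, hw, rfl⟩; exact hmaxx w hw
    · refine le_csSup ⟨f x (ymax x), ?_⟩ (Set.mem_image_of_mem _ (hymax x).1)
      rintro z ⟨w, hw, rfl⟩; exact hmaxx w hw
  have hKL' := hKL x hx y hy
  rw [hsup] at hKL'
  have hstep : (f x (ymax x) - f x y) ^ θ ≤ ε / τ := by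
    have h1 : (1 / τ) * Metric.infDist (0 : D)
        {g | ∃ n : D, (∀ w ∈ Y, ⟪n, w - y⟫ ≤ 0) ∧ g = -(gy x y) + n} ≤ (1 / τ) * ε :=
      mul_le_mul_of_nonneg_left hinfy (by positivity)
    calc (f x (ymax x) - f x y) ^ θ ≤ _ := hKL'
      _ ≤ (1 / τ) * ε := h1
      _ = ε / τ := by ring
  have hgap : f x (ymax x) - f x y ≤ a := by
    have h1 : ((f x (ymax x) - f x y) ^ θ) ^ ((1 : ℝ) / θ) ≤ a :=
      Real.rpow_le_rpow (Real.rpow_nonneg hgap0 θ) hstep (by positivity)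
    rwa [← Real.rpow_mul hgap0, mul_one_div, div_self (ne_of_gt hθ), Real.rpow_one] at h1
  -- Step 3: inner product bound from primal near-stationarity
  have hinner : ⟪gx x y, x - s⟫ ≤ ε * δ := by
    have hδrev : ‖x - s‖ = δ := by rw [hδdef, norm_sub_rev]
    refine le_of_forall_pos_le_add fun η hη => ?_
    have hSne : ({g | ∃ n : E, (∀ w ∈ X, ⟪n, w - x⟫ ≤ 0) ∧ g = gx x y + n} : Set E).Nonempty :=
      ⟨gx x y, 0, fun w _ => by simp, by simp⟩
    have hlt : Metric.infDist (0 : E)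
        {g | ∃ n : E, (∀ w ∈ X, ⟪n, w - x⟫ ≤ 0) ∧ g = gx x y + n} < ε + η / (δ + 1) :=
      lt_of_le_of_lt hinfx (lt_add_of_pos_right _ (by positivity))
    obtain ⟨g, hgS, hd⟩ := (Metric.infDist_lt_iff hSne).1 hlt
    obtain ⟨n, hn, rfl⟩ := hgS
    have h1 : ⟪n, s - x⟫ ≤ (0 : ℝ) := hn s hsX
    have h2 : (⟪gx x y + n, x - s⟫ : ℝ) ≤ ‖gx x y + n‖ * ‖x - s‖ := real_inner_le_norm _ _
    have h3 : ‖gx x y + n‖ < ε + η / (δ + 1) := by rwa [dist_zero_left] at hd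
    have h4 : (⟪gx x y, x - s⟫ : ℝ) = ⟪gx x y + n, x - s⟫ + ⟪n, s - x⟫ := by
      rw [inner_add_left, show s - x = -(x - s) by abel, inner_neg_right]; ring
    have h5 : ‖gx x y + n‖ * ‖x - s‖ ≤ (ε + η / (δ + 1)) * δ := by
      rw [hδrev]; exact mul_le_mul_of_nonneg_right h3.le hδ0
    have h6 : (ε + η / (δ + 1)) * δ ≤ ε * δ + η := by
      have h7 : η / (δ + 1) * δ ≤ η := by
        rw [div_mul_eq_mul_div, div_le_iff₀ (by positivity)]
        have h8 : η * δ ≤ η * (δ + 1) :=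
          mul_le_mul_of_nonneg_left (by linarith) hη.le
        linarith
      calc (ε + η / (δ + 1)) * δ = ε * δ + η / (δ + 1) * δ := by ring
        _ ≤ ε * δ + η := by linarith
    linarith
  -- Step 4: descent lemma (lower quadratic bound on f(·,y))
  have hdes : f x y + ⟪gx x y, s - x⟫ - Lx / 2 * δ ^ 2 ≤ f s y := by
    have hneg : ∀ u, HasGradientAt (fun u' => -(f u' y)) (-(gx u y)) u := by
      intro u
      have hh := (hgradx u y).hasFDerivAt.neg
      rw [← map_neg (InnerProductSpace.toDual ℝ E)] at hh
      exact (by simpa using hh.hasGradientAt : HasGradientAt (-fun x' => f x' y) (-gx u y) u)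
    have hLneg : ∀ u u', ‖-(gx u y) - -(gx u' y)‖ ≤ Lx * ‖u - u'‖ := by
      intro u u'
      have := hLipx u u' y y
      simp only [sub_self, norm_zero, add_zero] at this
      calc ‖-(gx u y) - -(gx u' y)‖ = ‖gx u y - gx u' y‖ := by
            rw [show -(gx u y) - -(gx u' y) = -(gx u y - gx u' y) by abel, norm_neg]
        _ ≤ Lx * ‖u - u'‖ := this
    have hD := descent_lemma (fun u => -(f u y)) (fun u => -(gx u y)) Lx hneg hLneg x (s - x)
    simp only [add_sub_cancel, inner_neg_left] at hD
    have hns : ‖s - x‖ = δ := rfl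
    rw [hns] at hD
    linarith
  -- Step 5: combine to get the key quadratic inequality
  have hmaxs := isMaxOn_iff.1 (hymax s).2
  have hsy : f s y ≤ f s (ymax s) := hmaxs y hy
  have hrel : (⟪gx x y, s - x⟫ : ℝ) = -⟪gx x y, x - s⟫ := by
    rw [show s - x = -(x - s) by abel, inner_neg_right]
  have hkey : μ * δ ^ 2 ≤ a + ε * δ := by
    rw [hμdef]
    nlinarith [hmin, hgap, hdes, hsy, hinner, hrel]
  -- Step 6: solve the quadratic inequality
  have hδle : δ ≤ 2 * ε / μ + Real.sqrt (2 * a / μ) := by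
    rcases le_or_gt (ε * δ) a with hc1 | hc1
    · have hδ2 : δ ^ 2 ≤ 2 * a / μ := by
        rw [le_div_iff₀ hμ]; nlinarith
      have hh := Real.sqrt_le_sqrt hδ2
      rw [Real.sqrt_sq hδ0] at hh
      have : 0 ≤ 2 * ε / μ := by positivity
      linarith
    · have h1 : μ * δ ^ 2 ≤ 2 * (ε * δ) := by linarith
      have hδμ : δ ≤ 2 * ε / μ := by
        rcases eq_or_lt_of_le hδ0 with h0 | h0
        · rw [← h0]; positivity
        · rw [le_div_iff₀ hμ]; nlinarith
      linarith [Real.sqrt_nonneg (2 * a / μ)]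
  -- Step 7: conclude, by cases on ε
  rcases le_or_gt ε 1 with hε1 | hε1
  · rcases eq_or_lt_of_le hε with h0 | h0
    · -- ε = 0
      have ha' : a = 0 := by
        rw [hadef, ← h0, zero_div, Real.zero_rpow (by positivity)]
      have hδ0' : δ ≤ 0 := by
        have := hδle
        rw [ha', ← h0] at this
        simpa using this
      rw [← h0, Real.zero_rpow (ne_of_gt hm0), mul_zero]
      exact hδ0'
    · -- 0 < ε ≤ 1
      have e1 : ε ≤ ε ^ m := by
        calc ε = ε ^ (1 : ℝ) := (Real.rpow_one ε).symm
          _ ≤ ε ^ m := Real.rpow_le_rpow_of_exponent_ge h0 hε1 hm1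
      have e2 : ε ^ c ≤ ε ^ m := Real.rpow_le_rpow_of_exponent_ge h0 hε1 hm2
      have hεm0 : 0 ≤ ε ^ m := Real.rpow_nonneg hε _
      have hsq : Real.sqrt (2 * a / μ) = Real.sqrt (2 / μ) * ((1 / τ) ^ c * ε ^ c) := by
        have h1 : 2 * a / μ = (2 / μ) * a := by ring
        rw [h1, Real.sqrt_mul h2μ.le, hadef,
          Real.sqrt_eq_rpow ((ε / τ) ^ ((1 : ℝ) / θ)),
          ← Real.rpow_mul (div_nonneg hε hτ.le)]
        have h2 : (1 : ℝ) / θ * (1 / 2) = c := by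
          rw [hcdef]; field_simp
        rw [h2]
        have h3 : ε / τ = ε * (1 / τ) := by ring
        rw [h3, Real.mul_rpow hε (by positivity)]
        ring
      calc δ ≤ 2 * ε / μ + Real.sqrt (2 * a / μ) := hδle
        _ = (2 / μ) * ε + Real.sqrt (2 / μ) * (1 / τ) ^ c * ε ^ c := by rw [hsq]; ring
        _ ≤ (2 / μ) * ε ^ m + Real.sqrt (2 / μ) * (1 / τ) ^ c * ε ^ m := by
            refine add_le_add (mul_le_mul_of_nonneg_left e1 h2μ.le)
              (mul_le_mul_of_nonneg_left e2 ?_)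
            exact mul_nonneg (Real.sqrt_nonneg _) hτc
        _ = C₁ * ε ^ m := by rw [hC₁def]; ring
        _ ≤ (C₁ + R) * ε ^ m := by nlinarith
  · -- ε > 1
    have h1m : 1 ≤ ε ^ m := Real.one_le_rpow hε1.le hm0.le
    have hδR : δ ≤ R := by
      have := Metric.dist_le_diam_of_mem hXc.isBounded hsX hx
      rwa [dist_eq_norm] at this
    calc δ ≤ R := hδR
      _ ≤ R * ε ^ m := le_mul_of_one_le_right hR h1m
      _ ≤ (C₁ + R) * ε ^ m := by nlinarith
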